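/- Let C_φ be a cutting for a knowledge base T and φ that is totally ordered by inclusion. If φ ▷ ψ (with respect to C_φ), then C_ψ = {𝕄 ∩ Mod(ψ) | 𝕄 ∈ C_φ} is a cutting for T and ψ, and ψ ▷ ψ (with respect to C_ψ). (Explanatory reflexivity E-Reflexivity.) -/
import Mathlib


variable {Sen M : Type*}

/-- The class of models of a set of sentences in a satisfaction system. -/
def ModS (sat : M → Sen → Prop) (T : Set Sen) : Set M := {m | ∀ φ ∈ T, sat m φ}

/-- The trivial models: those satisfying every sentence. -/
def TrivS (sat : M → Sen → Prop) : Set M := {m | ∀ φ : Sen, sat m φ}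

/-- A cutting for a knowledge base `T` and a sentence `φ`. -/
structure IsCutting (sat : M → Sen → Prop) (T : Set Sen) (φ : Sen) (C : Set (Set M)) : Prop where
  subset_mod : ∀ A ∈ C, A ⊆ ModS sat (T ∪ {φ})
  triv_lt : ∀ A ∈ C, TrivS sat ⊂ A
  union_closed : ∀ S ⊆ C, S.Nonempty → ⋃₀ S ∈ C
  top_mem : ModS sat (T ∪ {φ}) ∈ C
  wf : C.WellFoundedOn (fun A B => A ⊂ B)

/-- The set of ⊆-minimal elements of a family of sets. -/
def MinCut (C : Set (Set M)) : Set (Set M) := {A ∈ C | ∀ B ∈ C, ¬ B ⊂ A}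

/-- The explanatory relation based on a cutting `C` (for the observation whose cutting is `C`):
`ψ` is an explanation iff `Mod(T ∪ {ψ}) ≠ Triv` and `Mod(T ∪ {ψ})` is contained in some
minimal element of `C`. -/
def ExplRel (sat : M → Sen → Prop) (T : Set Sen) (C : Set (Set M)) (ψ : Sen) : Prop :=
  ModS sat (T ∪ {ψ}) ≠ TrivS sat ∧ ∃ A ∈ MinCut C, ModS sat (T ∪ {ψ}) ⊆ A

lemma modS_union (sat : M → Sen → Prop) (T S : Set Sen) :
    ModS sat (T ∪ S) = ModS sat T ∩ ModS sat S := by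
  ext m
  constructor
  · intro hm
    exact ⟨fun x hx => hm x (Or.inl hx), fun x hx => hm x (Or.inr hx)⟩
  · rintro ⟨h1, h2⟩ x (hx | hx)
    exacts [h1 x hx, h2 x hx]

lemma trivS_subset (sat : M → Sen → Prop) (T : Set Sen) : TrivS sat ⊆ ModS sat T :=
  fun m hm x _ => hm x

lemma sUnion_inter {X : Set M} (S' : Set (Set M)) :
    (⋃₀ S') ∩ X = ⋃₀ ((fun A => A ∩ X) '' S') := by
  ext m
  simp only [Set.mem_inter_iff, Set.mem_sUnion, Set.mem_image]
  constructor
  · rintro ⟨⟨A, hA, hmA⟩, hmX⟩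
    exact ⟨A ∩ X, ⟨A, hA, rfl⟩, hmA, hmX⟩
  · rintro ⟨_, ⟨A, hA, rfl⟩, hmA, hmX⟩
    exact ⟨⟨A, hA, hmA⟩, hmX⟩

theorem stmt_14 (sat : M → Sen → Prop) (T : Set Sen) (hT : T.Finite)
    (φ ψ : Sen) (Cφ : Set (Set M)) (hC : IsCutting sat T φ Cφ)
    (hchain : IsChain (· ⊆ ·) Cφ)
    (h : ExplRel sat T Cφ ψ) :
    IsCutting sat T ψ ((fun A => A ∩ ModS sat {ψ}) '' Cφ) ∧
      ExplRel sat T ((fun A => A ∩ ModS sat {ψ}) '' Cφ) ψ := by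
  obtain ⟨hne, A₀, ⟨hA₀C, hA₀min⟩, hsub⟩ := h
  set X : Set M := ModS sat {ψ} with hX
  have hXeq : ModS sat (T ∪ {ψ}) = ModS sat T ∩ X := modS_union sat T {ψ}
  -- A₀ is a least element of the chain
  have hA0le : ∀ A ∈ Cφ, A₀ ⊆ A := by
    intro A hA
    rcases eq_or_ne A A₀ with rfl | hne'
    · exact subset_rfl
    · rcases hchain hA hA₀C hne' with hle | hle
      · exact absurd (ssubset_of_subset_of_ne hle hne') (hA₀min A hA)
      · exact hle
  have hTop : A₀ ∩ X = ModS sat (T ∪ {ψ}) := by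
    apply Set.Subset.antisymm
    · intro m hm
      rw [hXeq]
      exact ⟨fun x hx => hC.subset_mod A₀ hA₀C hm.1 x (Or.inl hx), hm.2⟩
    · intro m hm
      exact ⟨hsub hm, (hXeq ▸ hm).2⟩
  have hss : TrivS sat ⊂ ModS sat (T ∪ {ψ}) :=
    ssubset_of_subset_of_ne (trivS_subset sat _) (Ne.symm hne)
  obtain ⟨m₀, hm₀mod, hm₀triv⟩ := Set.exists_of_ssubset hss
  have hm₀X : m₀ ∈ X := (hXeq ▸ hm₀mod).2
  have hm₀A : ∀ A ∈ Cφ, m₀ ∈ A := fun A hA => hA0le A hA (hsub hm₀mod)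
  have hcut : IsCutting sat T ψ ((fun A => A ∩ X) '' Cφ) := by
    constructor
    · rintro _ ⟨A, hA, rfl⟩ m ⟨hmA, hmX⟩
      rw [hXeq]
      exact ⟨fun x hx => hC.subset_mod A hA hmA x (Or.inl hx), hmX⟩
    · rintro _ ⟨A, hA, rfl⟩
      refine ssubset_of_subset_of_ne
        (fun m hm => ⟨(hC.triv_lt A hA).subset hm, trivS_subset sat _ hm⟩) ?_
      intro heq
      exact hm₀triv ((heq ▸ (⟨hm₀A A hA, hm₀X⟩ : m₀ ∈ A ∩ X)) : m₀ ∈ TrivS sat)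
    · intro S hS hSne
      obtain ⟨B, hB⟩ := hSne
      obtain ⟨A₁, hA₁, hfA₁'⟩ := hS hB
      have hfA₁ : A₁ ∩ X = B := hfA₁'
      set S' : Set (Set M) := {A ∈ Cφ | A ∩ X ∈ S} with hS'
      have hU : ⋃₀ S' ∈ Cφ :=
        hC.union_closed S' (fun A hA => hA.1) ⟨A₁, hA₁, hfA₁ ▸ hB⟩
      have himg : (fun A => A ∩ X) '' S' = S := by
        apply Set.Subset.antisymm
        · rintro _ ⟨A, hA, rfl⟩; exact hA.2
        · intro B' hB'
          obtain ⟨A, hA, rfl⟩ := hS hB'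
          exact ⟨A, ⟨hA, hB'⟩, rfl⟩
      exact ⟨⋃₀ S', hU, by show ⋃₀ S' ∩ X = ⋃₀ S; rw [sUnion_inter, himg]⟩
    · exact ⟨A₀, hA₀C, hTop⟩
    · -- well-foundedness
      have gmem : ∀ B : ↥((fun A => A ∩ X) '' Cφ),
          ⋃₀ {A ∈ Cφ | A ∩ X = (B : Set M)} ∈ Cφ := by
        rintro ⟨B, A, hA, hfA⟩
        exact hC.union_closed _ (fun A' hA' => hA'.1) ⟨A, hA, hfA⟩
      set g : ↥((fun A => A ∩ X) '' Cφ) → ↥Cφ :=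
        fun B => ⟨⋃₀ {A ∈ Cφ | A ∩ X = (B : Set M)}, gmem B⟩ with hg
      have hkey : ∀ B, ((g B : Set M)) ∩ X = (B : Set M) := by
        rintro ⟨B, A, hA, hfA'⟩
        have hfA : A ∩ X = B := hfA'
        show ⋃₀ {A ∈ Cφ | A ∩ X = B} ∩ X = B
        rw [sUnion_inter]
        apply Set.Subset.antisymm
        · rintro m ⟨_, ⟨A', hA', rfl⟩, hm⟩
          exact hA'.2 ▸ hm
        · intro m hm
          exact ⟨A ∩ X, ⟨A, ⟨hA, hfA⟩, rfl⟩, hfA.symm ▸ hm⟩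
      have mono : ∀ {a b : ↥((fun A => A ∩ X) '' Cφ)},
          (a : Set M) ⊂ (b : Set M) → (g a : Set M) ⊂ (g b : Set M) := by
        intro a b hab
        have hne2 : (g a : Set M) ≠ (g b : Set M) := by
          intro heq
          exact hab.ne (by rw [← hkey a, ← hkey b, heq])
        rcases hchain (g a).2 (g b).2 (Subtype.coe_ne_coe.mpr (fun h' => hne2 (congrArg _ h')) ) with hle | hle
        · exact ssubset_of_subset_of_ne hle hne2
        · exfalso
          have : (b : Set M) ⊆ (a : Set M) := by
            rw [← hkey a, ← hkey b]
            exact Set.inter_subset_inter_left X hle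
          exact hab.not_subset this
      exact Subrelation.wf (fun {a b} hab => mono hab) (InvImage.wf g hC.wf)
  refine ⟨hcut, hne, ModS sat (T ∪ {ψ}), ⟨⟨A₀, hA₀C, hTop⟩, ?_⟩, subset_rfl⟩
  rintro _ ⟨A, hA, rfl⟩ hBss
  exact hBss.not_subset (hTop ▸ Set.inter_subset_inter_left X (hA0le A hA))
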